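/- Let A be definite. For any edge (i,j), the following are equivalent: (i,j) is a critical edge of A; a_ij·(A*)_jk = (A*)_ik for all k; (A*)_kj = (A*)_ki·a_ij for all k. -/

import Mathlib

open Finset

/-- Max-times matrix product: `(A ⊗ B) i j = max_k (A i k * B k j)`. -/
noncomputable def mProd {n : ℕ} (A B : Matrix (Fin n) (Fin n) NNReal) :
    Matrix (Fin n) (Fin n) NNReal :=
  fun i j => univ.sup fun k => A i k * B k j

/-- Max-algebraic matrix powers, `mPow A 0 = I`. -/
noncomputable def mPow {n : ℕ} (A : Matrix (Fin n) (Fin n) NNReal) :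
    ℕ → Matrix (Fin n) (Fin n) NNReal
  | 0 => fun i j => if i = j then 1 else 0
  | k + 1 => mProd (mPow A k) A

/-- Kleene star `A* = I ⊕ A ⊕ ... ⊕ A^{n-1}` in max algebra. -/
noncomputable def klStar {n : ℕ} (A : Matrix (Fin n) (Fin n) NNReal) :
    Matrix (Fin n) (Fin n) NNReal :=
  fun i j => (Finset.range n).sup fun k => mPow A k i j

/-- Partial "sums" `I ⊕ A ⊕ ... ⊕ A^m` of the Kleene star series. -/
noncomputable def kPartial {n : ℕ} (A : Matrix (Fin n) (Fin n) NNReal) (m : ℕ) :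
    Matrix (Fin n) (Fin n) NNReal :=
  fun i j => (Finset.range (m + 1)).sup fun k => mPow A k i j

/-- The weight of the cycle given by the list `l` (with wrap-around edge). -/
def cycleWeight {n : ℕ} (A : Matrix (Fin n) (Fin n) NNReal) (l : List (Fin n)) : NNReal :=
  ((l.zip (l.rotate 1)).map fun p => A p.1 p.2).prod

/-- The geometric mean of a cycle: `w(σ,A)^{1/k}`. -/
noncomputable def cycleMean {n : ℕ} (A : Matrix (Fin n) (Fin n) NNReal) (l : List (Fin n)) :
    NNReal :=
  (cycleWeight A l) ^ ((l.length : ℝ)⁻¹)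

/-- The maximum cycle geometric mean `λ(A)`. -/
noncomputable def maxCycleMean {n : ℕ} (A : Matrix (Fin n) (Fin n) NNReal) : NNReal :=
  sSup {x | ∃ l : List (Fin n), l ≠ [] ∧ x = cycleMean A l}

/-- `(i,j)` is a critical edge: it lies on a cycle attaining `λ(A)`. -/
def criticalEdge {n : ℕ} (A : Matrix (Fin n) (Fin n) NNReal) (i j : Fin n) : Prop :=
  ∃ l : List (Fin n), l ≠ [] ∧ cycleMean A l = maxCycleMean A ∧ (i, j) ∈ l.zip (l.rotate 1)

/-- Max-algebraic matrix-vector product. -/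
noncomputable def mVec {n : ℕ} (A : Matrix (Fin n) (Fin n) NNReal) (x : Fin n → NNReal) :
    Fin n → NNReal :=
  fun i => univ.sup fun j => A i j * x j

namespace MaxAlg

variable {n : ℕ}

def ww (A : Matrix (Fin n) (Fin n) NNReal) : List (Fin n) → NNReal
  | [] => 1
  | [_] => 1
  | a :: b :: t => A a b * ww A (b :: t)

lemma sup_mul_const {α : Type*} (s : Finset α) (f : α → NNReal) (c : NNReal) :
    s.sup f * c = s.sup fun x => f x * c := by
  rcases s.eq_empty_or_nonempty with h | h
  · simp [h]
  · obtain ⟨x, hx, hs⟩ := Finset.exists_mem_eq_sup s h f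
    refine le_antisymm ?_ (Finset.sup_le fun b hb => mul_le_mul' (Finset.le_sup hb) le_rfl)
    rw [hs]; exact Finset.le_sup (f := fun x => f x * c) hx

lemma const_mul_sup {α : Type*} (s : Finset α) (f : α → NNReal) (c : NNReal) :
    c * s.sup f = s.sup fun x => c * f x := by
  rw [mul_comm, sup_mul_const]; simp [mul_comm]

lemma mProd_assoc (A B C : Matrix (Fin n) (Fin n) NNReal) :
    mProd (mProd A B) C = mProd A (mProd B C) := by
  funext i j
  show (univ.sup fun k => (univ.sup fun m => A i m * B m k) * C k j)
      = univ.sup fun m => A i m * mProd B C m j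
  rw [Finset.sup_congr rfl fun k _ => sup_mul_const univ (fun m => A i m * B m k) (C k j),
    Finset.sup_comm]
  refine Finset.sup_congr rfl fun m _ => ?_
  show _ = A i m * univ.sup fun k => B m k * C k j
  rw [const_mul_sup]
  exact Finset.sup_congr rfl fun k _ => mul_assoc _ _ _

lemma mProd_one (A : Matrix (Fin n) (Fin n) NNReal) : mProd A (mPow A 0) = A := by
  funext i j
  show (univ.sup fun k => A i k * mPow A 0 k j) = A i j
  refine le_antisymm (Finset.sup_le fun k _ => ?_) ?_
  · simp only [mPow]
    rcases eq_or_ne k j with rfl | h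
    · simp
    · simp [h]
  · have := Finset.le_sup (f := fun k => A i k * mPow A 0 k j) (Finset.mem_univ j)
    simpa [mPow] using this

lemma one_mProd (A : Matrix (Fin n) (Fin n) NNReal) : mProd (mPow A 0) A = A := by
  funext i j
  show (univ.sup fun k => mPow A 0 i k * A k j) = A i j
  refine le_antisymm (Finset.sup_le fun k _ => ?_) ?_
  · simp only [mPow]
    rcases eq_or_ne i k with rfl | h
    · simp
    · simp [h]
  · have := Finset.le_sup (f := fun k => mPow A 0 i k * A k j) (Finset.mem_univ i)
    simpa [mPow] using this

lemma mPow_succ_left (A : Matrix (Fin n) (Fin n) NNReal) (m : ℕ) :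
    mPow A (m + 1) = mProd A (mPow A m) := by
  induction m with
  | zero => show mProd (mPow A 0) A = mProd A (mPow A 0); rw [mProd_one, one_mProd]
  | succ m ih =>
    conv_lhs => rw [show mPow A (m+1+1) = mProd (mPow A (m+1)) A from rfl, ih, mProd_assoc]
    rfl

lemma ww_le_mPow (A : Matrix (Fin n) (Fin n) NNReal) :
    ∀ (l : List (Fin n)) (i : Fin n), ww A (i :: l) ≤ mPow A l.length i (l.getLastD i) := by
  intro l
  induction l with
  | nil => intro i; simp [ww, mPow]
  | cons b t ih =>
    intro i
    have h1 : ww A (i :: b :: t) = A i b * ww A (b :: t) := rfl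
    rw [h1, List.getLastD_cons]
    calc A i b * ww A (b :: t) ≤ A i b * mPow A t.length b (t.getLastD b) :=
          mul_le_mul' le_rfl (ih b)
      _ ≤ mPow A (t.length + 1) i (t.getLastD b) := by
          rw [mPow_succ_left]
          exact Finset.le_sup (f := fun c => A i c * mPow A t.length c (t.getLastD b))
            (Finset.mem_univ b)

lemma mPow_attain (A : Matrix (Fin n) (Fin n) NNReal) [NeZero n] :
    ∀ (m : ℕ) (i k : Fin n), mPow A m i k = 0 ∨
      ∃ l : List (Fin n), l.length = m ∧ l.getLastD i = k ∧ ww A (i :: l) = mPow A m i k := by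
  intro m
  induction m with
  | zero =>
    intro i k
    rcases eq_or_ne i k with rfl | h
    · exact Or.inr ⟨[], rfl, rfl, by simp [ww, mPow]⟩
    · exact Or.inl (by simp [mPow, h])
  | succ m ih =>
    intro i k
    rw [mPow_succ_left]
    obtain ⟨c, _, hc⟩ := Finset.exists_mem_eq_sup univ univ_nonempty
      (fun c => A i c * mPow A m c k)
    show mProd A (mPow A m) i k = 0 ∨ _
    have hm : mProd A (mPow A m) i k = A i c * mPow A m c k := hc
    rcases ih c k with h0 | ⟨l, hl, hlast, hww⟩
    · exact Or.inl (by rw [hm, h0, mul_zero])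
    · refine Or.inr ⟨c :: l, by simp [hl], by rw [List.getLastD_cons]; exact hlast, ?_⟩
      show A i c * ww A (c :: l) = _
      rw [hww, hm]

lemma mPow_le_klStar (A : Matrix (Fin n) (Fin n) NNReal) {m : ℕ} (hm : m < n) (i k : Fin n) :
    mPow A m i k ≤ klStar A i k :=
  Finset.le_sup (f := fun m => mPow A m i k) (Finset.mem_range.2 hm)

lemma klStar_attain (A : Matrix (Fin n) (Fin n) NNReal) [NeZero n] (i k : Fin n) :
    ∃ m < n, klStar A i k = mPow A m i k := by
  obtain ⟨m, hm, h⟩ := Finset.exists_mem_eq_sup (Finset.range n)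
    ⟨0, Finset.mem_range.2 (Nat.pos_of_ne_zero (NeZero.ne n))⟩ (fun m => mPow A m i k)
  exact ⟨m, Finset.mem_range.1 hm, h⟩

lemma getLastD_append' (l₂ : List (Fin n)) :
    ∀ (l₁ : List (Fin n)) (d : Fin n), (l₁ ++ l₂).getLastD d = l₂.getLastD (l₁.getLastD d) := by
  intro l₁
  induction l₁ with
  | nil => intro d; rfl
  | cons a t ih => intro d; rw [List.cons_append, List.getLastD_cons, List.getLastD_cons, ih]

lemma ww_append (A : Matrix (Fin n) (Fin n) NNReal) :
    ∀ (xs : List (Fin n)) (v : Fin n) (ys : List (Fin n)),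
      ww A (xs ++ v :: ys) = ww A (xs ++ [v]) * ww A (v :: ys)
  | [], v, ys => by cases ys <;> simp [ww]
  | [a], v, ys => by
      show ww A (a :: v :: ys) = ww A [a, v] * ww A (v :: ys)
      show A a v * ww A (v :: ys) = (A a v * ww A [v]) * ww A (v :: ys)
      simp [ww]
  | a :: b :: xs, v, ys => by
      have h := ww_append A (b :: xs) v ys
      show A a b * ww A (b :: (xs ++ v :: ys)) = (A a b * ww A (b :: (xs ++ [v]))) * ww A (v :: ys)
      rw [show (b :: (xs ++ v :: ys)) = (b :: xs) ++ v :: ys from rfl, h, mul_assoc]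
      rfl

/-- the vertex list ends with its getLastD -/
lemma exists_init (l : List (Fin n)) :
    ∀ i : Fin n, ∃ c : List (Fin n), i :: l = c ++ [l.getLastD i] := by
  induction l with
  | nil => intro i; exact ⟨[], rfl⟩
  | cons b t ih =>
    intro i
    obtain ⟨c, hc⟩ := ih b
    exact ⟨i :: c, by rw [List.getLastD_cons, List.cons_append, ← hc]⟩

lemma zip_prod_eq_ww (A : Matrix (Fin n) (Fin n) NNReal) :
    ∀ (t : List (Fin n)) (v w : Fin n),
      ((((v :: t).zip (t ++ [w])).map fun p => A p.1 p.2).prod) = ww A (v :: (t ++ [w]))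
  | [], v, w => by simp [ww]
  | b :: s, v, w => by
      have h := zip_prod_eq_ww A s b w
      show (((v, b) :: ((b :: s).zip (s ++ [w]))).map fun p => A p.1 p.2).prod = _
      rw [List.map_cons, List.prod_cons, h]
      rfl

lemma cycleWeight_eq (A : Matrix (Fin n) (Fin n) NNReal) (v : Fin n) (t : List (Fin n)) :
    cycleWeight A (v :: t) = ww A (v :: (t ++ [v])) := by
  rw [cycleWeight, show (v :: t).rotate 1 = t ++ [v] by
    rw [List.rotate_cons_succ, List.rotate_zero], zip_prod_eq_ww]


lemma not_nodup_decomp :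
    ∀ L : List (Fin n), ¬ L.Nodup → ∃ (v : Fin n) (p q r : List (Fin n)),
      L = p ++ (v :: (q ++ (v :: r))) := by
  intro L
  induction L with
  | nil => intro h; exact absurd List.nodup_nil h
  | cons a t ih =>
    intro h
    by_cases ha : a ∈ t
    · obtain ⟨q, r, rfl⟩ := List.append_of_mem ha
      exact ⟨a, [], q, r, rfl⟩
    · have ht : ¬ t.Nodup := fun hn => h (List.nodup_cons.2 ⟨ha, hn⟩)
      obtain ⟨v, p, q, r, rfl⟩ := ih ht
      exact ⟨v, a :: p, q, r, rfl⟩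

variable {A : Matrix (Fin n) (Fin n) NNReal}

lemma closed_le_one (hcw : ∀ l : List (Fin n), l ≠ [] → cycleWeight A l ≤ 1)
    (v : Fin n) (c : List (Fin n)) : ww A (v :: (c ++ [v])) ≤ 1 := by
  rw [← cycleWeight_eq]; exact hcw _ (List.cons_ne_nil _ _)

lemma ww_splice (hcw : ∀ l : List (Fin n), l ≠ [] → cycleWeight A l ≤ 1)
    (p : List (Fin n)) (v : Fin n) (q r : List (Fin n)) :
    ww A (p ++ (v :: (q ++ (v :: r)))) ≤ ww A (p ++ (v :: r)) := by
  rw [ww_append A p v (q ++ (v :: r)), ww_append A p v r]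
  refine mul_le_mul' le_rfl ?_
  have h : ww A (v :: (q ++ (v :: r))) = ww A ((v :: q) ++ [v]) * ww A (v :: r) :=
    ww_append A (v :: q) v r
  have h2 : ww A ((v :: q) ++ [v]) ≤ 1 := closed_le_one hcw v q
  calc ww A (v :: (q ++ (v :: r))) = ww A ((v :: q) ++ [v]) * ww A (v :: r) := h
    _ ≤ 1 * ww A (v :: r) := mul_le_mul' h2 le_rfl
    _ = ww A (v :: r) := one_mul _

lemma ww_star [NeZero n] (hcw : ∀ l : List (Fin n), l ≠ [] → cycleWeight A l ≤ 1) :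
    ∀ (m : ℕ) (l : List (Fin n)) (i : Fin n), l.length ≤ m →
      ww A (i :: l) ≤ klStar A i (l.getLastD i) := by
  have npos : 0 < n := Nat.pos_of_ne_zero (NeZero.ne n)
  intro m
  induction m with
  | zero =>
    intro l i hl
    rw [List.length_eq_zero_iff.1 (Nat.le_zero.1 hl)]
    have h := mPow_le_klStar A npos i i
    calc ww A (i :: ([] : List (Fin n))) = mPow A 0 i i := by simp [ww, mPow]
      _ ≤ klStar A i i := h
  | succ m ih =>
    intro l i hl
    by_cases hn : l.length < n
    · exact (ww_le_mPow A l i).trans (mPow_le_klStar A hn i _)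
    · have hnd : ¬ (i :: l).Nodup := by
        intro h
        have := List.Nodup.length_le_card h
        simp only [List.length_cons, Fintype.card_fin] at this
        omega
      obtain ⟨v, p, q, r, he⟩ := not_nodup_decomp _ hnd
      cases p with
      | nil =>
        rw [List.nil_append] at he
        injection he with h1 h2
        subst h1; subst h2
        have hlen : r.length ≤ m := by
          rw [List.length_append, List.length_cons] at hl; omega
        calc ww A (i :: (q ++ (i :: r))) ≤ ww A (i :: r) := ww_splice hcw [] i q r
          _ ≤ klStar A i (r.getLastD i) := ih r i hlen
          _ = klStar A i ((q ++ (i :: r)).getLastD i) := by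
              rw [getLastD_append', List.getLastD_cons]
      | cons a p' =>
        rw [List.cons_append] at he
        injection he with h1 h2
        subst h1; subst h2
        have hlen : (p' ++ (v :: r)).length ≤ m := by
          rw [List.length_append, List.length_cons, List.length_append,
            List.length_cons] at hl
          rw [List.length_append, List.length_cons]
          omega
        calc ww A (i :: (p' ++ (v :: (q ++ (v :: r)))))
            = ww A ((i :: p') ++ (v :: (q ++ (v :: r)))) := rfl
          _ ≤ ww A ((i :: p') ++ (v :: r)) := ww_splice hcw (i :: p') v q r
          _ = ww A (i :: (p' ++ (v :: r))) := rfl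
          _ ≤ klStar A i ((p' ++ (v :: r)).getLastD i) := ih _ i hlen
          _ = klStar A i ((p' ++ (v :: (q ++ (v :: r)))).getLastD i) := by
              rw [getLastD_append', getLastD_append', List.getLastD_cons,
                List.getLastD_cons, getLastD_append', List.getLastD_cons]

lemma ww_star' [NeZero n] (hcw : ∀ l : List (Fin n), l ≠ [] → cycleWeight A l ≤ 1)
    (l : List (Fin n)) (i : Fin n) : ww A (i :: l) ≤ klStar A i (l.getLastD i) :=
  ww_star hcw l.length l i le_rfl

lemma klStar_diag [NeZero n] (hcw : ∀ l : List (Fin n), l ≠ [] → cycleWeight A l ≤ 1)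
    (i : Fin n) : klStar A i i = 1 := by
  have npos : 0 < n := Nat.pos_of_ne_zero (NeZero.ne n)
  refine le_antisymm (Finset.sup_le fun m _ => ?_) ?_
  · rcases mPow_attain A m i i with h0 | ⟨l, -, hlast, hww⟩
    · rw [h0]; exact zero_le_one
    · rw [← hww]
      cases l with
      | nil => simp [ww]
      | cons b t =>
        obtain ⟨c, hc⟩ := exists_init (b :: t) i
        rw [hlast] at hc
        cases c with
        | nil => exact absurd (congrArg List.length hc) (by simp)
        | cons a c' =>
          rw [List.cons_append] at hc
          injection hc with h1 h2
          subst h1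
          rw [h2]
          exact closed_le_one hcw i c'
  · have h := mPow_le_klStar A npos i i
    calc (1 : NNReal) = mPow A 0 i i := by simp [mPow]
      _ ≤ klStar A i i := h

lemma klStar_trans [NeZero n] (hcw : ∀ l : List (Fin n), l ≠ [] → cycleWeight A l ≤ 1)
    (i u k : Fin n) : klStar A i u * klStar A u k ≤ klStar A i k := by
  obtain ⟨a, _, h1⟩ := klStar_attain A i u
  rcases mPow_attain A a i u with h0 | ⟨l1, -, he1, hw1⟩
  · rw [h1, h0, zero_mul]; exact zero_le'
  obtain ⟨b, _, h2⟩ := klStar_attain A u k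
  rcases mPow_attain A b u k with h0 | ⟨l2, -, he2, hw2⟩
  · rw [h2, h0, mul_zero]; exact zero_le'
  obtain ⟨c, hc⟩ := exists_init l1 i
  rw [he1] at hc
  have hsplit : i :: (l1 ++ l2) = c ++ (u :: l2) := by
    rw [show i :: (l1 ++ l2) = (i :: l1) ++ l2 from rfl, hc, List.append_assoc]
    rfl
  have hcomb : ww A (i :: (l1 ++ l2)) = ww A (i :: l1) * ww A (u :: l2) := by
    rw [hsplit, ww_append, ← hc]
  have hend : (l1 ++ l2).getLastD i = k := by rw [getLastD_append', he1, he2]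
  calc klStar A i u * klStar A u k = ww A (i :: (l1 ++ l2)) := by
        rw [h1, h2, ← hw1, ← hw2, hcomb]
    _ ≤ klStar A i ((l1 ++ l2).getLastD i) := ww_star' hcw _ i
    _ = klStar A i k := by rw [hend]

lemma edge_trans [NeZero n] (hcw : ∀ l : List (Fin n), l ≠ [] → cycleWeight A l ≤ 1)
    (i j k : Fin n) : A i j * klStar A j k ≤ klStar A i k := by
  obtain ⟨b, _, h2⟩ := klStar_attain A j k
  rcases mPow_attain A b j k with h0 | ⟨l, -, he, hw⟩
  · rw [h2, h0, mul_zero]; exact zero_le'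
  calc A i j * klStar A j k = ww A (i :: (j :: l)) := by
        rw [h2, ← hw]; rfl
    _ ≤ klStar A i ((j :: l).getLastD i) := ww_star' hcw _ i
    _ = klStar A i k := by rw [List.getLastD_cons, he]

lemma edge_trans2 [NeZero n] (hcw : ∀ l : List (Fin n), l ≠ [] → cycleWeight A l ≤ 1)
    (k i j : Fin n) : klStar A k i * A i j ≤ klStar A k j := by
  obtain ⟨b, _, h2⟩ := klStar_attain A k i
  rcases mPow_attain A b k i with h0 | ⟨l, -, he, hw⟩
  · rw [h2, h0, zero_mul]; exact zero_le'
  obtain ⟨c, hc⟩ := exists_init l k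
  rw [he] at hc
  have hsplit : k :: (l ++ [j]) = c ++ (i :: [j]) := by
    rw [show k :: (l ++ [j]) = (k :: l) ++ [j] from rfl, hc, List.append_assoc]
    rfl
  have hcomb : ww A (k :: (l ++ [j])) = ww A (k :: l) * A i j := by
    rw [hsplit, ww_append, ← hc]
    show _ * (A i j * ww A [j]) = _
    rw [show ww A [j] = 1 from rfl, mul_one]
  calc klStar A k i * A i j = ww A (k :: (l ++ [j])) := by rw [h2, ← hw, hcomb]
    _ ≤ klStar A k ((l ++ [j]).getLastD k) := ww_star' hcw _ k
    _ = klStar A k j := by rw [getLastD_append']; rfl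

lemma pivot_le_one [NeZero n] (hcw : ∀ l : List (Fin n), l ≠ [] → cycleWeight A l ≤ 1)
    (i j : Fin n) : A i j * klStar A j i ≤ 1 := by
  obtain ⟨b, _, h2⟩ := klStar_attain A j i
  rcases mPow_attain A b j i with h0 | ⟨l, -, he, hw⟩
  · rw [h2, h0, mul_zero]; exact zero_le_one
  rw [h2, ← hw]
  obtain ⟨c, hc⟩ := exists_init l j
  rw [he] at hc
  have : A i j * ww A (j :: l) = ww A (i :: (c ++ [i])) := by rw [← hc]; rfl
  rw [this]
  exact closed_le_one hcw i c

lemma mem_zip_decomp :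
    ∀ (t : List (Fin n)) (v w i j : Fin n), (i, j) ∈ (v :: t).zip (t ++ [w]) →
      ∃ xs ys : List (Fin n), v :: (t ++ [w]) = xs ++ (i :: (j :: ys))
  | [], v, w, i, j => by
      intro h
      rw [List.nil_append, List.zip_cons_cons] at h
      rcases List.mem_cons.1 h with he | hm
      · injection he with h1 h2
        subst h1; subst h2
        exact ⟨[], [], rfl⟩
      · simp at hm
  | b :: s, v, w, i, j => by
      intro h
      rw [List.cons_append, List.zip_cons_cons] at h
      rcases List.mem_cons.1 h with he | hm
      · injection he with h1 h2
        subst h1; subst h2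
        exact ⟨[], s ++ [w], rfl⟩
      · obtain ⟨xs, ys, hx⟩ := mem_zip_decomp s b w i j hm
        refine ⟨v :: xs, ys, ?_⟩
        rw [show v :: ((b :: s) ++ [w]) = v :: (b :: (s ++ [w])) from rfl, hx]
        rfl

lemma len_ne_zero {α : Type*} {l : List α} (hl : l ≠ []) : (l.length : ℝ) ≠ 0 := by
  have := List.length_pos_iff.2 hl
  exact Nat.cast_ne_zero.2 (by omega)

lemma weight_eq_mean_rpow {l : List (Fin n)} (hl : l ≠ []) :
    cycleWeight A l = (cycleMean A l) ^ (l.length : ℝ) := by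
  rw [cycleMean, ← NNReal.rpow_mul, inv_mul_cancel₀ (len_ne_zero hl), NNReal.rpow_one]

lemma weight_le_one {l : List (Fin n)} (hl : l ≠ []) (h : cycleMean A l ≤ 1) :
    cycleWeight A l ≤ 1 := by
  rw [weight_eq_mean_rpow hl]
  calc (cycleMean A l) ^ (l.length : ℝ) ≤ 1 ^ (l.length : ℝ) :=
        NNReal.rpow_le_rpow h (Nat.cast_nonneg _)
    _ = 1 := NNReal.one_rpow _

lemma weight_one_of_mean_one {l : List (Fin n)} (hl : l ≠ []) (h : cycleMean A l = 1) :
    cycleWeight A l = 1 := by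
  rw [weight_eq_mean_rpow hl, h, NNReal.one_rpow]

lemma mean_one_of_weight_one {l : List (Fin n)} (h : cycleWeight A l = 1) :
    cycleMean A l = 1 := by
  rw [cycleMean, h, NNReal.one_rpow]

lemma bddAbove_means :
    BddAbove {x : NNReal | ∃ l : List (Fin n), l ≠ [] ∧ x = cycleMean A l} := by
  set B := 1 ⊔ univ.sup (fun p : Fin n × Fin n => A p.1 p.2) with hB
  refine ⟨B, ?_⟩
  rintro x ⟨l, hl, rfl⟩
  have hw : cycleWeight A l ≤ B ^ l.length := by
    rw [cycleWeight]
    have hb : ∀ x ∈ (l.zip (l.rotate 1)).map fun p => A p.1 p.2, x ≤ B := by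
      intro x hx
      obtain ⟨p, _, rfl⟩ := List.mem_map.1 hx
      rw [hB]
      exact le_trans
        (Finset.le_sup (f := fun p : Fin n × Fin n => A p.1 p.2) (Finset.mem_univ p))
        le_sup_right
    have := List.prod_le_pow_card _ B hb
    rwa [List.length_map, List.length_zip, List.length_rotate, min_self] at this
  rw [cycleMean]
  calc (cycleWeight A l) ^ ((l.length : ℝ)⁻¹)
      ≤ (B ^ l.length) ^ ((l.length : ℝ)⁻¹) :=
        NNReal.rpow_le_rpow hw (by positivity)
    _ = B := by
        rw [← NNReal.rpow_natCast B, ← NNReal.rpow_mul,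
          mul_inv_cancel₀ (len_ne_zero hl), NNReal.rpow_one]

lemma mean_le_max {l : List (Fin n)} (hl : l ≠ []) : cycleMean A l ≤ maxCycleMean A :=
  le_csSup bddAbove_means ⟨l, hl, rfl⟩

lemma one_le_pivot_of_crit [NeZero n]
    (hcw : ∀ l : List (Fin n), l ≠ [] → cycleWeight A l ≤ 1)
    (hdef : maxCycleMean A = 1) {i j : Fin n} (hcrit : criticalEdge A i j) :
    1 ≤ A i j * klStar A j i := by
  obtain ⟨l, hl, hmean, hmem⟩ := hcrit
  cases l with
  | nil => exact absurd rfl hl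
  | cons v t =>
    have hwt : cycleWeight A (v :: t) = 1 :=
      weight_one_of_mean_one (List.cons_ne_nil _ _) (hmean.trans hdef)
    rw [cycleWeight_eq] at hwt
    rw [List.rotate_cons_succ, List.rotate_zero] at hmem
    obtain ⟨xs, ys, hx⟩ := mem_zip_decomp t v v i j hmem
    have hendL : (t ++ [v]).getLastD v = v := by rw [getLastD_append']; rfl
    cases xs with
    | nil =>
      rw [List.nil_append] at hx
      injection hx with h1 h2
      subst h1
      have hys : ys.getLastD j = v := by
        have h := hendL; rw [h2, List.getLastD_cons] at h; exact h
      calc (1 : NNReal) = A v j * ww A (j :: ys) := by rw [← hwt, h2]; rfl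
        _ ≤ A v j * klStar A j (ys.getLastD j) := mul_le_mul' le_rfl (ww_star' hcw ys j)
        _ = A v j * klStar A j v := by rw [hys]
    | cons a xs' =>
      rw [List.cons_append] at hx
      injection hx with h1 h2
      subst h1
      have hys : ys.getLastD j = v := by
        have h := hendL
        rw [h2, getLastD_append', List.getLastD_cons, List.getLastD_cons] at h
        exact h
      obtain ⟨c, hc⟩ := exists_init ys j
      rw [hys] at hc
      have hW : ww A (j :: (ys ++ (xs' ++ [i]))) = ww A (j :: ys) * ww A (v :: (xs' ++ [i])) := by
        rw [show j :: (ys ++ (xs' ++ [i])) = (j :: ys) ++ (xs' ++ [i]) from rfl, hc,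
          List.append_assoc,
          show [v] ++ (xs' ++ [i]) = v :: (xs' ++ [i]) from rfl, ww_append, ← hc]
      have hWend : (ys ++ (xs' ++ [i])).getLastD j = i := by
        rw [getLastD_append', getLastD_append']; rfl
      have hL : ww A (v :: (t ++ [v]))
          = ww A (v :: (xs' ++ [i])) * (A i j * ww A (j :: ys)) := by
        rw [h2, show v :: (xs' ++ (i :: (j :: ys))) = (v :: xs') ++ (i :: (j :: ys)) from rfl,
          ww_append]
        rfl
      calc (1 : NNReal) = ww A (v :: (t ++ [v])) := hwt.symm
        _ = A i j * (ww A (j :: ys) * ww A (v :: (xs' ++ [i]))) := by rw [hL]; ring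
        _ = A i j * ww A (j :: (ys ++ (xs' ++ [i]))) := by rw [hW]
        _ ≤ A i j * klStar A j ((ys ++ (xs' ++ [i])).getLastD j) :=
            mul_le_mul' le_rfl (ww_star' hcw _ j)
        _ = A i j * klStar A j i := by rw [hWend]

lemma crit_of_pivot [NeZero n]
    (hcw : ∀ l : List (Fin n), l ≠ [] → cycleWeight A l ≤ 1)
    (hdef : maxCycleMean A = 1) {i j : Fin n} (hp : A i j * klStar A j i = 1) :
    criticalEdge A i j := by
  obtain ⟨b, _, h2⟩ := klStar_attain A j i
  rcases mPow_attain A b j i with h0 | ⟨l, -, he, hw⟩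
  · rw [h2, h0, mul_zero] at hp; exact absurd hp zero_ne_one
  obtain ⟨c, hc⟩ := exists_init l j
  rw [he] at hc
  refine ⟨i :: c, List.cons_ne_nil _ _, ?_, ?_⟩
  · rw [hdef]
    apply mean_one_of_weight_one
    rw [cycleWeight_eq, ← hc]
    show A i j * ww A (j :: l) = 1
    rw [hw, ← h2]
    exact hp
  · rw [List.rotate_cons_succ, List.rotate_zero, ← hc, List.zip_cons_cons]
    exact List.mem_cons_self

end MaxAlg

/-- for definite `A`, `(i,j)` is critical iff
`a_ij a*_jk = a*_ik` for all `k`, iff `a*_kj = a*_ki a_ij` for all `k`. -/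
theorem stmt_11 {n : ℕ} (A : Matrix (Fin n) (Fin n) NNReal)
    (hdef : maxCycleMean A = 1) (i j : Fin n) :
    (criticalEdge A i j ↔ ∀ k, A i j * klStar A j k = klStar A i k) ∧
    (criticalEdge A i j ↔ ∀ k, klStar A k j = klStar A k i * A i j) := by
  have npos : 0 < n := i.pos
  haveI : NeZero n := ⟨npos.ne'⟩
  have hcw : ∀ l : List (Fin n), l ≠ [] → cycleWeight A l ≤ 1 := fun l hl =>
    MaxAlg.weight_le_one hl (hdef ▸ MaxAlg.mean_le_max hl)
  have hpiv_of_crit : criticalEdge A i j → A i j * klStar A j i = 1 := fun h =>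
    le_antisymm (MaxAlg.pivot_le_one hcw i j) (MaxAlg.one_le_pivot_of_crit hcw hdef h)
  constructor
  · constructor
    · intro h k
      have hp := hpiv_of_crit h
      refine le_antisymm (MaxAlg.edge_trans hcw i j k) ?_
      calc klStar A i k = A i j * (klStar A j i * klStar A i k) := by
            rw [← mul_assoc, hp, one_mul]
        _ ≤ A i j * klStar A j k := mul_le_mul' le_rfl (MaxAlg.klStar_trans hcw j i k)
    · intro h
      apply MaxAlg.crit_of_pivot hcw hdef
      rw [h i]
      exact MaxAlg.klStar_diag hcw i
  · constructor
    · intro h k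
      have hp := hpiv_of_crit h
      refine le_antisymm ?_ (MaxAlg.edge_trans2 hcw k i j)
      calc klStar A k j = (klStar A k j * klStar A j i) * A i j := by
            rw [mul_assoc, mul_comm (klStar A j i), hp, mul_one]
        _ ≤ klStar A k i * A i j := mul_le_mul' (MaxAlg.klStar_trans hcw k j i) le_rfl
    · intro h
      apply MaxAlg.crit_of_pivot hcw hdef
      rw [mul_comm, ← h j]
      exact MaxAlg.klStar_diag hcw j
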